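/- Let m ≥ 1, k ∈ {±1}^m with ∏_{j=1}^m k_j = 1, and let p be the degree-m polynomial with det(a^k(φ) − λI_m) = (−1)^m(p(λ) − 2cos φ). Then the set S = ⋃_{n ∈ ℕ} ⋃_{j ∈ {1,…,n−1}, j ≠ n/2} spec(a^k(2πj/n)) equals p⁻¹(2cos(π(ℚ\ℤ))) and is dense in p⁻¹([−2,2]). -/

import Mathlib

open Complex Matrix

/-- The symbol matrix `a^k(φ) ∈ ℂ^{m×m}` of an `m`-periodic tridiagonal sign operator:
superdiagonal entries `1`, subdiagonal entries `k₁,…,k_{m-1}` (here `k 0, …, k (m-2)`),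
corner entries `k_m e^{iφ}` at position `(1,m)` and `e^{-iφ}` at position `(m,1)`.
The entries are defined as sums so that for small `m` overlapping positions add up
(e.g. for `m = 1` the matrix is `(k₁ e^{iφ} + e^{-iφ})`). -/
noncomputable def symb (m : ℕ) (k : ℕ → ℂ) (φ : ℝ) : Matrix (Fin m) (Fin m) ℂ :=
  Matrix.of fun r c =>
    (if (c : ℕ) = (r : ℕ) + 1 then 1 else 0) +
    (if (r : ℕ) = (c : ℕ) + 1 then k c else 0) +
    (if (r : ℕ) = 0 ∧ (c : ℕ) = m - 1 then k c * Complex.exp (φ * Complex.I) else 0) +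
    (if (r : ℕ) = m - 1 ∧ (c : ℕ) = 0 then Complex.exp (-φ * Complex.I) else 0)

lemma spec_iff_aux (m : ℕ) (k : ℕ → ℂ) (p : Polynomial ℂ)
    (hdet : ∀ (φ : ℝ) (lam : ℂ),
      (symb m k φ - lam • 1).det = (-1) ^ m * (p.eval lam - 2 * Real.cos φ))
    (φ : ℝ) (lam : ℂ) :
    lam ∈ spectrum ℂ (symb m k φ) ↔ p.eval lam = 2 * Real.cos φ := by
  rw [spectrum.mem_iff, Matrix.isUnit_iff_isUnit_det, isUnit_iff_ne_zero, not_not]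
  have h1 : (algebraMap ℂ (Matrix (Fin m) (Fin m) ℂ)) lam - symb m k φ
      = -(symb m k φ - lam • 1) := by
    rw [Algebra.algebraMap_eq_smul_one, neg_sub]
  rw [h1, Matrix.det_neg, hdet, Fintype.card_fin, ← mul_assoc, ← mul_pow]
  simp [sub_eq_zero]

lemma dense_nonint_rat : Dense {t : ℝ | ∃ q : ℚ, q.den ≠ 1 ∧ (q : ℝ) = t} := by
  intro x
  rw [Metric.mem_closure_iff]
  intro ε hε
  obtain ⟨N, hN⟩ := exists_nat_gt (1/ε)
  have hN0 : 0 < (N:ℝ) := lt_of_le_of_lt (by positivity) hN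
  set a : ℤ := ⌊(N:ℝ) * x⌋ with ha
  set q : ℚ := ((2*a+1 : ℤ) : ℚ) / ((2*(N:ℤ) : ℤ) : ℚ) with hqdef
  refine ⟨(q:ℝ), ⟨q, ?_, rfl⟩, ?_⟩
  · intro hden
    have hNz : (2*(N:ℤ) : ℤ) ≠ 0 := by
      have : 0 < N := by exact_mod_cast hN0
      omega
    have h2 := (Rat.den_div_intCast_eq_one_iff (2*a+1) (2*(N:ℤ)) hNz).mp hden
    have h3 : (2:ℤ) ∣ 2*a+1 := dvd_trans ⟨N, by ring⟩ h2
    omega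
  · have hqr : (q : ℝ) = (a:ℝ)/N + 1/(2*N) := by
      rw [hqdef]; push_cast; field_simp
    have hfl1 : (a:ℝ) ≤ (N:ℝ) * x := Int.floor_le _
    have hfl2 : (N:ℝ) * x < a + 1 := Int.lt_floor_add_one _
    have h5 : (a:ℝ)/N ≤ x := by rw [div_le_iff₀ hN0]; linarith
    have h6 : x < (a:ℝ)/N + 1/N := by
      have : x < ((a:ℝ)+1)/N := by rw [lt_div_iff₀ hN0]; linarith
      have e : ((a:ℝ)+1)/N = (a:ℝ)/N + 1/N := by ring
      linarith [e ▸ this]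
    have e2 : 1/(N:ℝ) = 2*(1/(2*N)) := by ring
    have hd : dist x (q:ℝ) ≤ 1/(2*N) := by
      rw [Real.dist_eq, hqr, abs_le]
      constructor <;> linarith
    have hNe : 1 < ε * N := by rw [div_lt_iff₀ hε] at hN; linarith
    have : 1/(2*(N:ℝ)) < ε := by
      rw [div_lt_iff₀ (by positivity)]; nlinarith
    linarith

lemma mem_closure_cos_vals (x : ℝ) (hx : x ∈ Set.Icc (-2:ℝ) 2) :
    (x:ℂ) ∈ closure {c : ℂ | ∃ q : ℚ, q.den ≠ 1 ∧
      c = ((2 * Real.cos (Real.pi * q) : ℝ) : ℂ)} := by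
  have hπ : Real.pi ≠ 0 := Real.pi_ne_zero
  set t : ℝ := Real.arccos (x/2) / Real.pi with ht
  have hπt : Real.pi * t = Real.arccos (x/2) := by
    rw [ht]; field_simp
  have hxt : x = 2 * Real.cos (Real.pi * t) := by
    rw [hπt, Real.cos_arccos (by linarith [hx.1]) (by linarith [hx.2])]; ring
  set f : ℝ → ℝ := fun s => 2 * Real.cos (Real.pi * s) with hf
  have hfc : Continuous f := by fun_prop
  set D : Set ℝ := {t : ℝ | ∃ q : ℚ, q.den ≠ 1 ∧ (q : ℝ) = t} with hD
  have h1 : x ∈ closure (f '' D) := by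
    have ht' : t ∈ closure D := dense_nonint_rat t
    have h := image_closure_subset_closure_image hfc (Set.mem_image_of_mem f ht')
    rw [hxt]; exact h
  have h2 : (x:ℂ) ∈ closure (Complex.ofReal '' (f '' D)) := by
    have := image_closure_subset_closure_image Complex.continuous_ofReal
      (Set.mem_image_of_mem Complex.ofReal h1)
    exact this
  refine closure_mono ?_ h2
  rintro c ⟨y, ⟨s, ⟨q, hq, rfl⟩, rfl⟩, rfl⟩
  exact ⟨q, hq, rfl⟩

theorem eigenvalues_at_roots_of_unity_dense
    (m : ℕ) (hm : 1 ≤ m) (k : ℕ → ℂ) (hk : ∀ i < m, k i = 1 ∨ k i = -1)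
    (hprod : ∏ j ∈ Finset.range m, k j = 1)
    (p : Polynomial ℂ) (hpdeg : p.natDegree = m)
    (hdet : ∀ (φ : ℝ) (lam : ℂ),
      (symb m k φ - lam • 1).det = (-1) ^ m * (p.eval lam - 2 * Real.cos φ)) :
    {lam : ℂ | ∃ n j : ℕ, 1 ≤ j ∧ j ≤ n - 1 ∧ 2 * j ≠ n ∧
        lam ∈ spectrum ℂ (symb m k (2 * Real.pi * j / n))} =
      {lam : ℂ | ∃ q : ℚ, q.den ≠ 1 ∧ p.eval lam = ((2 * Real.cos (Real.pi * q) : ℝ) : ℂ)} ∧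
    {lam : ℂ | ∃ x ∈ Set.Icc (-2 : ℝ) 2, p.eval lam = (x : ℂ)} ⊆
      closure {lam : ℂ | ∃ n j : ℕ, 1 ≤ j ∧ j ≤ n - 1 ∧ 2 * j ≠ n ∧
        lam ∈ spectrum ℂ (symb m k (2 * Real.pi * j / n))} := by
  have key : ∀ lam : ℂ,
      (∃ n j : ℕ, 1 ≤ j ∧ j ≤ n - 1 ∧ 2 * j ≠ n ∧
        lam ∈ spectrum ℂ (symb m k (2 * Real.pi * j / n))) ↔
      (∃ q : ℚ, q.den ≠ 1 ∧ p.eval lam = ((2 * Real.cos (Real.pi * q) : ℝ) : ℂ)) := by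
    intro lam
    constructor
    · rintro ⟨n, j, h1, h2, h3, hspec⟩
      have hn : 2 ≤ n := by omega
      rw [spec_iff_aux m k p hdet] at hspec
      refine ⟨((2*j : ℕ) : ℚ) / ((n : ℕ) : ℚ), ?_, ?_⟩
      · intro hden
        obtain ⟨c, hc⟩ := (Rat.den_div_natCast_eq_one_iff (2*j) n (by omega)).mp hden
        rcases Nat.lt_or_ge c 2 with hcl | hcg
        · interval_cases c <;> omega
        · have h4 : n * 2 ≤ n * c := Nat.mul_le_mul_left n hcg
          omega
      · have hnr : ((n:ℝ)) ≠ 0 := by positivity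
        have hq : ((((2*j : ℕ) : ℚ) / ((n : ℕ) : ℚ) : ℚ) : ℝ) = 2*(j:ℝ)/(n:ℝ) := by
          push_cast; ring
        have hang : Real.cos (2 * Real.pi * j / n) = Real.cos (Real.pi *
            ((((2*j : ℕ) : ℚ) / ((n : ℕ) : ℚ) : ℚ) : ℝ)) := by
          rw [hq]; congr 1; field_simp
        rw [hspec, hang]; push_cast; ring
    · rintro ⟨q, hq, heval⟩
      set z : ℤ := ⌊q/2⌋ with hz
      set q2 : ℚ := q - 2*z with hq2
      have hz1 : (z:ℚ) ≤ q/2 := Int.floor_le _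
      have hz2 : q/2 < z+1 := Int.lt_floor_add_one _
      have h02 : 0 ≤ q2 := by rw [hq2]; linarith
      have h2lt : q2 < 2 := by rw [hq2]; linarith
      have hq2den : q2.den ≠ 1 := by
        intro h
        apply hq
        have h1 : ((q2.num : ℤ) : ℚ) = q2 := Rat.den_eq_one_iff q2 |>.mp h
        have : q = ((q2.num + 2*z : ℤ) : ℚ) := by
          push_cast [h1]
          rw [hq2]; push_cast [h1]; ring
        rw [this, Rat.den_intCast]
      have hpos : 0 < q2 := by
        rcases lt_or_eq_of_le h02 with h | h
        · exact h
        · exfalso; apply hq2den; rw [← h]; rfl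
      have hne1 : q2 ≠ 1 := by
        intro h; apply hq2den; rw [h]; rfl
      have hnum : 0 < q2.num := Rat.num_pos.mpr hpos
      have hdenp : 0 < q2.den := q2.pos
      have hdq : ((q2.num : ℚ)) / ((q2.den : ℚ)) = q2 := Rat.num_div_den q2
      have hlt : q2.num < 2 * q2.den := by
        have hd0 : (0:ℚ) < (q2.den : ℚ) := by exact_mod_cast hdenp
        rw [← hdq, div_lt_iff₀ hd0] at h2lt
        exact_mod_cast (by linarith : ((q2.num : ℚ)) < 2 * ((q2.den : ℚ)))
      have hneq : q2.num ≠ (q2.den : ℤ) := by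
        intro h
        apply hne1
        rw [← hdq, h]
        push_cast
        exact div_self (by exact_mod_cast hdenp.ne')
      refine ⟨2 * q2.den, q2.num.toNat, by omega, by omega, by omega, ?_⟩
      rw [spec_iff_aux m k p hdet]
      have hjr : ((q2.num.toNat : ℕ) : ℝ) = (q2.num : ℝ) := by
        exact_mod_cast Int.toNat_of_nonneg hnum.le
      have hq2r : ((q2 : ℚ) : ℝ) = (q2.num : ℝ) / (q2.den : ℝ) := by rw [Rat.cast_def]
      have hang : 2 * Real.pi * ((q2.num.toNat : ℕ) : ℝ) / ((2 * q2.den : ℕ) : ℝ)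
          = Real.pi * ((q2 : ℚ) : ℝ) := by
        rw [hq2r]
        push_cast [hjr]
        field_simp
      have hqq2 : Real.cos (Real.pi * ((q : ℚ) : ℝ)) = Real.cos (Real.pi * ((q2 : ℚ) : ℝ)) := by
        have : ((q : ℚ) : ℝ) = ((q2 : ℚ) : ℝ) + 2 * (z : ℝ) := by
          rw [hq2]; push_cast; ring
        rw [this, mul_add]
        have : Real.pi * ((q2:ℚ):ℝ) + Real.pi * (2 * (z:ℝ))
            = Real.pi * ((q2:ℚ):ℝ) + (z:ℝ) * (2 * Real.pi) := by ring
        rw [this]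
        exact_mod_cast Real.cos_add_int_mul_two_pi _ z
      rw [heval, hang, ← hqq2]
      push_cast
      ring
  constructor
  · ext lam
    simp only [Set.mem_setOf_eq]
    exact key lam
  · rintro lam ⟨x, hx, heval⟩
    have hana : AnalyticAt ℂ (fun z => Polynomial.eval z p) lam :=
      (AnalyticOnNhd.eval_polynomial (𝕜 := ℂ) p) lam (Set.mem_univ _)
    rcases hana.eventually_constant_or_nhds_le_map_nhds with hconst | hmap
    · exfalso
      have hinf : {z : ℂ | (p - Polynomial.C (Polynomial.eval lam p)).IsRoot z}.Infinite := by
        apply Set.Infinite.mono (s := {z : ℂ | Polynomial.eval z p = Polynomial.eval lam p})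
        · intro z hz
          simp only [Set.mem_setOf_eq, Polynomial.IsRoot, Polynomial.eval_sub,
            Polynomial.eval_C]
          rw [hz]; ring
        · exact infinite_of_mem_nhds lam hconst
      have hzero := Polynomial.eq_zero_of_infinite_isRoot _ hinf
      have : p = Polynomial.C (Polynomial.eval lam p) := by
        have := sub_eq_zero.mp hzero
        exact this
      rw [this, Polynomial.natDegree_C] at hpdeg
      omega
    · rw [mem_closure_iff_nhds]
      intro t ht
      have himg : (fun z => Polynomial.eval z p) '' t ∈ nhds (Polynomial.eval lam p) :=
        hmap (Filter.image_mem_map ht)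
      have hclos : Polynomial.eval lam p ∈ closure {c : ℂ | ∃ q : ℚ, q.den ≠ 1 ∧
          c = ((2 * Real.cos (Real.pi * q) : ℝ) : ℂ)} := by
        rw [heval]
        exact mem_closure_cos_vals x hx
      rw [mem_closure_iff_nhds] at hclos
      obtain ⟨c, hc1, q, hq, hc2⟩ := hclos _ himg
      obtain ⟨mu, hmu, hmueq⟩ := hc1
      refine ⟨mu, hmu, (key mu).mpr ⟨q, hq, ?_⟩⟩
      exact hmueq.trans hc2
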